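/- If the number of units of every fund is constant over [s,t], i.e. k_i(u) = c_i > 0 for all u ∈ [s,t] and each i, then the average rate of return equals the rate of growth of the total wealth: r̄(s,t) = (A(t) − A(s))/A(s), where A(u) = Σ_{i=1}^n k_i(u) w_i(u). -/

import Mathlib

open MeasureTheory Real

/-- The average rate of return of a group of `n` funds over `[a,b]`:
`r̄(a,b) = exp (∫_a^b ∑ i (k i u * w i u / ∑ j, k j u * w j u) * δ_i(u) du) - 1`,
where `δ_i(u) = (w i)'(u) / w i u`. -/
noncomputable def avgReturn (n : ℕ) (w k : Fin n → ℝ → ℝ) (a b : ℝ) : ℝ :=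
  Real.exp (∫ u in a..b,
    ∑ i, (k i u * w i u / ∑ j, k j u * w j u) * (deriv (w i) u / w i u)) - 1

/-- If the number of units of every fund is constant over `[s,t]`, i.e.
`k i u = c i > 0` for all `u ∈ [s,t]`, then the average rate of return equals the
rate of growth of the total wealth `A u = ∑ i, k i u * w i u`:
`r̄(s,t) = (A t - A s) / A s`. -/
theorem avgReturn_constant_units
    (n : ℕ) (s t : ℝ) (hst : s < t)
    (w k : Fin n → ℝ → ℝ)
    (hwpos : ∀ i, ∀ u ∈ Set.Icc s t, 0 < w i u)
    (hkpos : ∀ i, ∀ u ∈ Set.Icc s t, 0 < k i u)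
    (hwdiff : ∀ i, ∀ u ∈ Set.Icc s t, DifferentiableAt ℝ (w i) u)
    (hkdiff : ∀ i, ∀ u ∈ Set.Icc s t, DifferentiableAt ℝ (k i) u)
    (hwderiv : ∀ i, ContinuousOn (deriv (w i)) (Set.Icc s t))
    (hkderiv : ∀ i, ContinuousOn (deriv (k i)) (Set.Icc s t))
    (c : Fin n → ℝ) (hc : ∀ i, 0 < c i)
    (hk : ∀ i, ∀ u ∈ Set.Icc s t, k i u = c i)
    (A : ℝ → ℝ) (hA : A = fun u => ∑ i, k i u * w i u) :
    avgReturn n w k s t = (A t - A s) / A s := by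
  rcases Nat.eq_zero_or_pos n with hn | hn
  · subst hn
    simp [avgReturn, hA]
  -- main case
  set B : ℝ → ℝ := fun u => ∑ i, c i * w i u with hB
  have hs : s ∈ Set.Icc s t := ⟨le_refl s, hst.le⟩
  have ht : t ∈ Set.Icc s t := ⟨hst.le, le_refl t⟩
  have hBpos : ∀ u ∈ Set.Icc s t, 0 < B u := by
    intro u hu
    apply Finset.sum_pos
    · intro i _
      exact mul_pos (hc i) (hwpos i u hu)
    · exact Finset.univ_nonempty_iff.mpr (Fin.pos_iff_nonempty.mp hn)
  have hBderiv : ∀ u ∈ Set.Icc s t,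
      HasDerivAt B (∑ i, c i * deriv (w i) u) u := by
    intro u hu
    rw [show B = ∑ i, fun x => c i * w i x from by funext x; simp [hB, Finset.sum_apply]]
    apply HasDerivAt.sum
    intro i _
    exact ((hwdiff i u hu).hasDerivAt).const_mul (c i)
  -- the integrand equals (deriv B)/B on [s,t]
  have hcong : Set.EqOn
      (fun u => ∑ i, (k i u * w i u / ∑ j, k j u * w j u) * (deriv (w i) u / w i u))
      (fun u => (∑ i, c i * deriv (w i) u) / B u) (Set.uIcc s t) := by
    intro u hu
    rw [Set.uIcc_of_le hst.le] at hu
    have hBne : B u ≠ 0 := (hBpos u hu).ne'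
    have hden : (∑ j, k j u * w j u) = B u := by
      apply Finset.sum_congr rfl
      intro j _
      rw [hk j u hu]
    simp only [hden]
    rw [Finset.sum_div]
    apply Finset.sum_congr rfl
    intro i _
    have hwne : w i u ≠ 0 := (hwpos i u hu).ne'
    rw [hk i u hu]
    field_simp
  have key : (∫ u in s..t,
      ∑ i, (k i u * w i u / ∑ j, k j u * w j u) * (deriv (w i) u / w i u))
      = Real.log (B t) - Real.log (B s) := by
    rw [intervalIntegral.integral_congr hcong]
    apply intervalIntegral.integral_eq_sub_of_hasDerivAt
    · intro u hu
      rw [Set.uIcc_of_le hst.le] at hu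
      have h1 : HasDerivAt (fun x => Real.log (B x))
          ((∑ i, c i * deriv (w i) u) / B u) u := by
        have := (hBderiv u hu).log (hBpos u hu).ne'
        exact this
      exact h1
    · apply ContinuousOn.intervalIntegrable
      rw [Set.uIcc_of_le hst.le]
      apply ContinuousOn.div
      · apply continuousOn_finset_sum
        intro i _
        exact (hwderiv i).const_smul (c i)
      · apply continuousOn_finset_sum
        intro i _
        exact ContinuousOn.const_smul (fun u hu => ((hwdiff i u hu).continuousAt).continuousWithinAt) (c i)
      · intro u hu
        exact (hBpos u hu).ne'
  have hAs : A s = B s := by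
    rw [hA]
    exact Finset.sum_congr rfl fun i _ => by rw [hk i s hs]
  have hAt : A t = B t := by
    rw [hA]
    exact Finset.sum_congr rfl fun i _ => by rw [hk i t ht]
  rw [avgReturn, key, ← Real.log_div (hBpos t ht).ne' (hBpos s hs).ne',
    Real.exp_log (div_pos (hBpos t ht) (hBpos s hs)), hAs, hAt]
  rw [sub_div, div_self (hBpos s hs).ne']
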